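/- Let n ≥ 1, let p* ∈ (0,∞)^n, let w_i > 0, let f ≥ 1, γ ≥ 1 and 0 < α ≤ 1. Let x_i : (0,∞)^n → (0,∞) satisfy: (i) x_i(p*) = w_i; (ii) x_i is nonincreasing in each coordinate j ≠ i (all other goods are complements of good i); (iii) for every price vector p and every scalar 0 < q < 1, x_i(q·p) ≤ x_i(p)/q^γ; (iv) for every price vector p and every t > 1, replacing the i-th coordinate p_i of p by t·p_i changes the value of x_i to at most x_i(p)·t^{−α}. Then for every f-bounded price vector p whose i-th coordinate satisfies p_i = f·p_i*/q with 1 ≤ q ≤ f², one has x_i(p) ≤ w_i · f^{γ−2α} · q^{α}. -/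

import Mathlib

/-- Lemma 3, part 2 (f-bounded demand upper bound in a market of complements):
if `x_i(p*) = w_i`, `x_i` is nonincreasing in every coordinate `j ≠ i`,
lowering all prices by a factor `q < 1` raises `x_i` by at most a factor `q^{−γ}`,
and raising the single price `p_i` by a factor `t > 1` lowers `x_i` to at most
`x_i·t^{−α}`, then for any `f`-bounded price vector with
`p_i = f·p_i*/q`, `1 ≤ q ≤ f²`, we have `x_i(p) ≤ w_i·f^{γ−2α}·q^{α}`. -/
theorem stmt9 (n : ℕ) (hn : 1 ≤ n) (i : Fin n)
    (pstar : Fin n → ℝ) (hpstar : ∀ j, 0 < pstar j)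
    (w f γ α : ℝ) (hw : 0 < w) (hf : 1 ≤ f) (hγ : 1 ≤ γ)
    (hα0 : 0 < α) (hα1 : α ≤ 1)
    (x : (Fin n → ℝ) → ℝ)
    (hxpos : ∀ p : Fin n → ℝ, (∀ j, 0 < p j) → 0 < x p)
    (heq : x pstar = w)
    (hcompl : ∀ p : Fin n → ℝ, (∀ j, 0 < p j) → ∀ j, j ≠ i →
      ∀ c : ℝ, p j ≤ c → x (Function.update p j c) ≤ x p)
    (hincome : ∀ p : Fin n → ℝ, (∀ j, 0 < p j) → ∀ q : ℝ, 0 < q → q < 1 →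
      x (fun j => q * p j) ≤ x p / q ^ γ)
    (hprice : ∀ p : Fin n → ℝ, (∀ j, 0 < p j) → ∀ t : ℝ, 1 < t →
      x (Function.update p i (t * p i)) ≤ x p * t ^ (-α)) :
    ∀ p : Fin n → ℝ, (∀ j, pstar j / f ≤ p j ∧ p j ≤ f * pstar j) →
      ∀ q : ℝ, 1 ≤ q → q ≤ f ^ 2 → p i = f * pstar i / q →
      x p ≤ w * f ^ (γ - 2 * α) * q ^ α := by
  intro p hb q hq1 hq2 hpi
  have hf0 : (0:ℝ) < f := lt_of_lt_of_le one_pos hf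
  have hq0 : (0:ℝ) < q := lt_of_lt_of_le one_pos hq1
  have hppos : ∀ j, 0 < p j := fun j =>
    lt_of_lt_of_le (div_pos (hpstar j) hf0) (hb j).1
  -- step 1 : lower all prices by 1/f
  set p0 : Fin n → ℝ := fun j => (1/f) * pstar j with hp0def
  have hp0pos : ∀ j, 0 < p0 j := fun j => mul_pos (by positivity) (hpstar j)
  have hfγ : (0:ℝ) < f ^ γ := Real.rpow_pos_of_pos hf0 γ
  have hx1 : x p0 ≤ w * f ^ γ := by
    rcases eq_or_lt_of_le hf with hfe | hfl
    · have : p0 = pstar := by funext j; simp [hp0def, ← hfe]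
      rw [this, heq, ← hfe, Real.one_rpow, mul_one]
    · have h := hincome pstar hpstar (1/f) (by positivity)
        ((div_lt_one hf0).mpr hfl)
      refine le_trans h ?_
      rw [heq, Real.div_rpow zero_le_one hf0.le, Real.one_rpow,
        div_div_eq_mul_div, div_one]
  -- step 2 : raise coordinate i by factor t = f^2/q
  set t : ℝ := f ^ 2 / q with htdef
  have ht1 : 1 ≤ t := (one_le_div hq0).mpr hq2
  have htpi : t * p0 i = p i := by
    rw [hpi, htdef, hp0def]
    field_simp
  have hx2 : x (Function.update p0 i (p i)) ≤ w * f ^ γ * t ^ (-α) := by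
    rcases eq_or_lt_of_le ht1 with hte | htl
    · have hpp : p i = p0 i := by rw [← htpi, ← hte, one_mul]
      have : Function.update p0 i (p i) = p0 := by
        rw [hpp]; exact Function.update_eq_self i p0
      rw [this, ← hte, Real.one_rpow, mul_one]
      exact hx1
    · have h := hprice p0 hp0pos t htl
      rw [htpi] at h
      exact le_trans h (mul_le_mul_of_nonneg_right hx1 (by positivity))
  -- step 3 : raise the other coordinates one by one
  set g : Finset (Fin n) → (Fin n → ℝ) :=
    fun s j => if j = i ∨ j ∈ s then p j else pstar j / f with hgdef
  have hgpos : ∀ s, ∀ j, 0 < g s j := by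
    intro s j
    simp only [hgdef]
    split
    · exact hppos j
    · exact div_pos (hpstar j) hf0
  have hstep : ∀ s : Finset (Fin n), x (g s) ≤ x (g ∅) := by
    intro s
    induction s using Finset.induction with
    | empty => exact le_refl _
    | @insert a s ha ih =>
      rcases eq_or_ne a i with rfl | hai
      · have : g (insert a s) = g s := by
          funext j; simp only [hgdef, Finset.mem_insert]
          by_cases hj : j = a
          · simp [hj]
          · simp [hj]
        rw [this]; exact ih
      · have hupd : g (insert a s) = Function.update (g s) a (p a) := by
          funext j
          rcases eq_or_ne j a with rfl | hj
          · simp [hgdef, Function.update_self]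
          · simp [hgdef, Function.update_of_ne hj, Finset.mem_insert, hj]
        have hga : g s a = pstar a / f := by
          simp [hgdef, hai, ha]
        have hle : g s a ≤ p a := by rw [hga]; exact (hb a).1
        calc x (g (insert a s)) = x (Function.update (g s) a (p a)) := by rw [hupd]
          _ ≤ x (g s) := hcompl (g s) (hgpos s) a hai (p a) hle
          _ ≤ x (g ∅) := ih
  have hgempty : g ∅ = Function.update p0 i (p i) := by
    funext j
    rcases eq_or_ne j i with rfl | hj
    · simp [hgdef, Function.update_self]
    · simp [hgdef, Function.update_of_ne hj, hj, hp0def, one_div,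
        div_eq_inv_mul]
  have hguniv : g Finset.univ = p := by
    funext j; simp [hgdef]
  have hfinal : x p ≤ w * f ^ γ * t ^ (-α) := by
    calc x p = x (g Finset.univ) := by rw [hguniv]
      _ ≤ x (g ∅) := hstep Finset.univ
      _ = x (Function.update p0 i (p i)) := by rw [hgempty]
      _ ≤ _ := hx2
  -- arithmetic
  have e1 : t ^ (-α) = f ^ ((2:ℝ) * (-α)) * q ^ α := by
    rw [htdef, Real.div_rpow (by positivity) hq0.le, Real.rpow_neg hq0.le,
      div_eq_mul_inv, inv_inv, ← Real.rpow_natCast f 2,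
      ← Real.rpow_mul hf0.le]
    norm_num
  have harith : w * f ^ γ * t ^ (-α) = w * f ^ (γ - 2 * α) * q ^ α := by
    rw [e1, ← mul_assoc, mul_assoc w, ← Real.rpow_add hf0]
    have : γ + (2:ℝ) * (-α) = γ - 2 * α := by ring
    rw [this, mul_assoc]
  rw [harith] at hfinal
  exact hfinal
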